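/- ∑_{k=1}^∞ (27/20)^k / (k · C(3k,k)) = (√15/2)·arctan(√15 − √12) − (1/4)·log(5/2). -/

import Mathlib

open Real intervalIntegral MeasureTheory

noncomputable def ff (k : ℕ) (t : ℝ) : ℝ := (27/20:ℝ)^(k+1) * (t^k * (1-t)^(2*k+2))

noncomputable def FF (t : ℝ) : ℝ :=
  -(1/6)*Real.log (5-3*t) - (5/12)*Real.log (9*t^2-3*t+4)
    + (Real.sqrt 15/6)*Real.arctan ((6*t-1)/Real.sqrt 15)

lemma beta_nat : ∀ (b a : ℕ), ∫ t in (0:ℝ)..1, t^a * (1-t)^b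
    = (a.factorial * b.factorial : ℝ) / (a+b+1).factorial := by
  intro b
  induction b with
  | zero =>
    intro a
    have ha : (a:ℝ) + 1 ≠ 0 := by positivity
    have hf : (a.factorial : ℝ) ≠ 0 := by positivity
    simp [integral_pow, Nat.factorial_succ]
    field_simp
  | succ b IH =>
    intro a
    have hu : ∀ x ∈ Set.uIcc (0:ℝ) 1, HasDerivAt (fun t : ℝ => (1-t)^(b+1))
        (-((b+1) * (1-x)^b)) x := by
      intro x _
      have h := ((hasDerivAt_id x).const_sub 1).pow (b+1)
      simp only [id_eq, Nat.add_sub_cancel] at h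
      refine h.congr_deriv ?_
      push_cast; ring
    have hv : ∀ x ∈ Set.uIcc (0:ℝ) 1, HasDerivAt (fun t : ℝ => t^(a+1)/(a+1)) (x^a) x := by
      intro x _
      have h := ((hasDerivAt_pow (a+1) x).div_const (a+1))
      simp only [Nat.add_sub_cancel, Nat.cast_add, Nat.cast_one] at h
      refine h.congr_deriv ?_
      have : (a:ℝ) + 1 ≠ 0 := by positivity
      field_simp
    have hiu : IntervalIntegrable (fun x : ℝ => -((b+1:ℝ) * (1-x)^b)) volume 0 1 := by
      apply Continuous.intervalIntegrable; continuity
    have hiv : IntervalIntegrable (fun x : ℝ => x^a) volume 0 1 := by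
      apply Continuous.intervalIntegrable; continuity
    have key := intervalIntegral.integral_mul_deriv_eq_deriv_mul hu hv hiu hiv
    have e1 : ∫ x in (0:ℝ)..1, (1-x)^(b+1) * x^a = ∫ x in (0:ℝ)..1, x^a * (1-x)^(b+1) := by
      apply intervalIntegral.integral_congr; intro x _; ring
    have e2 : ∫ x in (0:ℝ)..1, -((b+1:ℝ) * (1-x)^b) * (x^(a+1)/(a+1))
        = (-((b+1:ℝ)/(a+1))) * ∫ x in (0:ℝ)..1, x^(a+1) * (1-x)^b := by
      rw [← intervalIntegral.integral_const_mul]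
      apply intervalIntegral.integral_congr; intro x _
      have : (a:ℝ) + 1 ≠ 0 := by positivity
      field_simp
    rw [e1, e2, IH (a+1)] at key
    rw [key]
    have h3 : ((a+1) + b + 1) = (a + (b+1) + 1) := by omega
    rw [h3]
    have hf : ((a + (b+1) + 1).factorial : ℝ) ≠ 0 := by positivity
    have ha : (a:ℝ) + 1 ≠ 0 := by positivity
    simp [Nat.factorial_succ]
    field_simp

lemma term_eq (k : ℕ) : (27/20 : ℝ)^(k+1) / ((((k:ℝ)+1)) * (((3*(k+1)).choose (k+1) : ℕ) : ℝ))
    = ∫ t in Set.Ioc (0:ℝ) 1, ff k t := by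
  have h1 : ∫ t in Set.Ioc (0:ℝ) 1, ff k t
      = (27/20:ℝ)^(k+1) * ∫ t in (0:ℝ)..1, t^k * (1-t)^(2*k+2) := by
    unfold ff
    rw [intervalIntegral.integral_of_le (by norm_num : (0:ℝ) ≤ 1), ← MeasureTheory.integral_const_mul]
  rw [h1, beta_nat, show k + (2*k+2) + 1 = 3*(k+1) from by omega]
  have hchoose := Nat.choose_mul_factorial_mul_factorial (show k+1 ≤ 3*(k+1) by omega)
  rw [show 3*(k+1) - (k+1) = 2*k+2 from by omega] at hchoose
  have hc : ((3*(k+1)).choose (k+1) : ℝ) * (k+1).factorial * (2*k+2).factorial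
      = ((3*(k+1)).factorial : ℝ) := by exact_mod_cast congrArg (Nat.cast : ℕ → ℝ) hchoose
  have h8 : ((k+1).factorial : ℝ) = ((k:ℝ)+1) * k.factorial := by
    rw [Nat.factorial_succ]; push_cast; ring
  have key : (((k:ℝ)+1) * ((3*(k+1)).choose (k+1) : ℝ)) * ((k.factorial : ℝ) * (2*k+2).factorial)
      = ((3*(k+1)).factorial : ℝ) := by rw [← hc, h8]; ring
  have h4 : ((3*(k+1)).factorial : ℝ) ≠ 0 := by positivity
  have h6 : (((k:ℝ)+1) * ((3*(k+1)).choose (k+1) : ℝ)) ≠ 0 := by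
    have := Nat.choose_pos (show k+1 ≤ 3*(k+1) by omega)
    have h7 : (0:ℝ) < ((3*(k+1)).choose (k+1) : ℝ) := by exact_mod_cast this
    positivity
  have hN : ((k.factorial : ℝ) * ((2*k+2).factorial : ℝ)) ≠ 0 := by positivity
  have hND : (k.factorial : ℝ) * ((2*k+2).factorial : ℝ) / ((3*(k+1)).factorial : ℝ)
      = 1 / (((k:ℝ)+1) * ((3*(k+1)).choose (k+1):ℝ)) := by
    rw [← key]
    field_simp
  rw [hND]
  ring

lemma cube_bound {t : ℝ} (h0 : 0 ≤ t) (h1 : t ≤ 1) : t*(1-t)^2 ≤ 4/27 := by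
  nlinarith [sq_nonneg (3*t-1), sq_nonneg t]

lemma denom_pos {t : ℝ} (h0 : 0 ≤ t) (h1 : t ≤ 1) : 0 < 20 - 27*(t*(1-t)^2) := by
  nlinarith [cube_bound h0 h1]

lemma ff_bound {k : ℕ} {t : ℝ} (h0 : 0 ≤ t) (h1 : t ≤ 1) :
    ‖ff k t‖ ≤ (27/20) * (1/5:ℝ)^k := by
  have hev : (0:ℝ) ≤ (1-t)^(2*k+2) := by
    rw [show 2*k+2 = 2*(k+1) from by ring, pow_mul]
    positivity
  have hnn : 0 ≤ ff k t := by
    unfold ff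
    have := pow_nonneg h0 k
    positivity
  rw [Real.norm_of_nonneg hnn]
  unfold ff
  have e1 : t^k * (1-t)^(2*k+2) = (t*(1-t)^2)^k * (1-t)^2 := by
    rw [mul_pow, ← pow_mul]; ring
  have e2 : (t*(1-t)^2)^k ≤ (4/27:ℝ)^k :=
    pow_le_pow_left₀ (by positivity) (cube_bound h0 h1) k
  have e3 : (1-t)^2 ≤ 1 := by nlinarith
  calc (27/20:ℝ)^(k+1) * (t^k * (1-t)^(2*k+2))
      ≤ (27/20:ℝ)^(k+1) * ((4/27)^k * 1) := by
        rw [e1]; apply mul_le_mul_of_nonneg_left _ (by positivity)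
        exact mul_le_mul e2 e3 (by positivity) (by positivity)
    _ = (27/20) * (1/5:ℝ)^k := by
        rw [pow_succ, mul_one, mul_comm ((27/20:ℝ)^k) (27/20:ℝ), mul_assoc, ← mul_pow]
        norm_num

lemma geom_sum {t : ℝ} (h0 : 0 ≤ t) (h1 : t ≤ 1) :
    ∑' k : ℕ, ff k t = 27*(1-t)^2 / (20 - 27*(t*(1-t)^2)) := by
  have hr0 : (0:ℝ) ≤ (27/20) * (t*(1-t)^2) := by positivity
  have hr1 : (27/20) * (t*(1-t)^2) < 1 := by nlinarith [cube_bound h0 h1]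
  have e : ∀ k : ℕ, ff k t = ((27/20)*(1-t)^2) * ((27/20) * (t*(1-t)^2))^k := by
    intro k
    unfold ff
    rw [mul_pow, mul_pow, ← pow_mul, pow_succ]
    ring
  rw [tsum_congr e, tsum_mul_left, tsum_geometric_of_lt_one hr0 hr1]
  have hd := denom_pos h0 h1
  rw [eq_div_iff (by linarith)]
  have h2 : 1 - (27/20) * (t*(1-t)^2) ≠ 0 := by linarith
  field_simp
  rw [mul_div_assoc, div_self (by linarith), mul_one]

lemma sum_eq_integral :
    ∑' k : ℕ, (27/20 : ℝ)^(k+1) / ((((k:ℝ)+1)) * (((3*(k+1)).choose (k+1) : ℕ) : ℝ))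
    = ∫ t in Set.Ioc (0:ℝ) 1, 27*(1-t)^2 / (20 - 27*(t*(1-t)^2)) := by
  have hmeas : MeasurableSet (Set.Ioc (0:ℝ) 1) := measurableSet_Ioc
  have hcont : ∀ k : ℕ, Continuous (ff k) := by
    intro k; unfold ff; continuity
  have hint : ∀ k : ℕ, Integrable (ff k) (volume.restrict (Set.Ioc (0:ℝ) 1)) :=
    fun k => (hcont k).integrableOn_Ioc
  have hsum : Summable (fun k : ℕ => ∫ t in Set.Ioc (0:ℝ) 1, ‖ff k t‖) := by
    apply Summable.of_nonneg_of_le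
        (fun k => integral_nonneg (fun t => norm_nonneg _))
        (fun k => ?_)
        (((summable_geometric_of_lt_one (by norm_num) (by norm_num : (1/5:ℝ) < 1))).mul_left (27/20))
    calc ∫ t in Set.Ioc (0:ℝ) 1, ‖ff k t‖
        ≤ ∫ _t in Set.Ioc (0:ℝ) 1, (27/20) * (1/5:ℝ)^k := by
          apply setIntegral_mono_on ((hint k).norm) (integrableOn_const measure_Ioc_lt_top.ne)
            hmeas
          intro t ht
          exact ff_bound ht.1.le ht.2
      _ = (27/20) * (1/5:ℝ)^k := by simp
  have hswap := MeasureTheory.integral_tsum_of_summable_integral_norm hint hsum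
  calc ∑' k : ℕ, (27/20 : ℝ)^(k+1) / ((((k:ℝ)+1)) * (((3*(k+1)).choose (k+1) : ℕ) : ℝ))
      = ∑' k : ℕ, ∫ t in Set.Ioc (0:ℝ) 1, ff k t := tsum_congr (fun k => term_eq k)
    _ = ∫ t in Set.Ioc (0:ℝ) 1, ∑' k : ℕ, ff k t := hswap
    _ = ∫ t in Set.Ioc (0:ℝ) 1, 27*(1-t)^2 / (20 - 27*(t*(1-t)^2)) := by
        apply setIntegral_congr_fun hmeas
        intro t ht
        exact geom_sum ht.1.le ht.2

lemma FF_deriv {t : ℝ} (h0 : 0 ≤ t) (h1 : t ≤ 1) :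
    HasDerivAt FF (27*(1-t)^2 / (20 - 27*(t*(1-t)^2))) t := by
  have s15 : Real.sqrt 15 ^ 2 = 15 := Real.sq_sqrt (by norm_num)
  have s15pos : (0:ℝ) < Real.sqrt 15 := Real.sqrt_pos.2 (by norm_num)
  have h5 : (0:ℝ) < 5 - 3*t := by linarith
  have hq : (0:ℝ) < 9*t^2-3*t+4 := by nlinarith [sq_nonneg (6*t-1)]
  have d1 : HasDerivAt (fun x : ℝ => 5 - 3*x) (-3) t := by
    simpa using ((hasDerivAt_id t).const_mul (3:ℝ)).const_sub 5
  have d1' := d1.log h5.ne'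
  have d2 : HasDerivAt (fun x : ℝ => 9*x^2-3*x+4) (18*t-3) t := by
    have := (((hasDerivAt_pow 2 t).const_mul (9:ℝ)).sub
      ((hasDerivAt_id t).const_mul (3:ℝ))).add_const 4
    simpa using this.congr_deriv (by ring)
  have d2' := d2.log hq.ne'
  have d3 : HasDerivAt (fun x : ℝ => (6*x-1)/Real.sqrt 15) (6/Real.sqrt 15) t := by
    simpa using (((hasDerivAt_id t).const_mul (6:ℝ)).sub_const 1).div_const (Real.sqrt 15)
  have d3' := d3.arctan
  have D := ((d1'.const_mul (-(1/6):ℝ)).sub (d2'.const_mul ((5/12):ℝ))).add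
    (d3'.const_mul (Real.sqrt 15/6))
  have hFF : FF = fun x : ℝ => -(1/6)*Real.log (5-3*x) - (5/12)*Real.log (9*x^2-3*x+4)
      + (Real.sqrt 15/6)*Real.arctan ((6*x-1)/Real.sqrt 15) := rfl
  rw [hFF]
  refine D.congr_deriv ?_
  have harg : (0:ℝ) < 1 + ((6*t-1)/Real.sqrt 15)^2 := by positivity
  have hd : 20 - 27*(t*(1-t)^2) = (5-3*t)*(9*t^2-3*t+4) := by ring
  rw [hd]
  have hq' : t*(t*9-3)+4 ≠ 0 := by nlinarith
  field_simp
  rw [s15]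
  ring

lemma integral_eval : ∫ t in Set.Ioc (0:ℝ) 1, 27*(1-t)^2 / (20 - 27*(t*(1-t)^2))
    = FF 1 - FF 0 := by
  rw [← intervalIntegral.integral_of_le zero_le_one]
  apply intervalIntegral.integral_eq_sub_of_hasDerivAt
  · intro t ht
    rw [Set.uIcc_of_le zero_le_one] at ht
    exact FF_deriv ht.1 ht.2
  · apply ContinuousOn.intervalIntegrable
    apply ContinuousOn.div
    · exact (by continuity : Continuous fun t : ℝ => 27*(1-t)^2).continuousOn
    · exact (by continuity : Continuous fun t : ℝ => 20 - 27*(t*(1-t)^2)).continuousOn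
    · intro t ht
      rw [Set.uIcc_of_le zero_le_one] at ht
      exact (denom_pos ht.1 ht.2).ne'

lemma arctan_triple :
    Real.arctan (5/Real.sqrt 15) + Real.arctan (1/Real.sqrt 15)
      = 3 * Real.arctan (Real.sqrt 15 - Real.sqrt 12) := by
  set s := Real.sqrt 15 with hs_def
  set r := Real.sqrt 12 with hr_def
  have hs : s^2 = 15 := Real.sq_sqrt (by norm_num)
  have hr : r^2 = 12 := Real.sq_sqrt (by norm_num)
  have hspos : (0:ℝ) < s := Real.sqrt_pos.2 (by norm_num)
  have hrpos : (0:ℝ) < r := Real.sqrt_pos.2 (by norm_num)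
  have hppos : (0:ℝ) < s*r := mul_pos hspos hrpos
  have hp2 : (s*r)^2 = 180 := by rw [mul_pow, hs, hr]; norm_num
  have hp : 40/3 < s*r := by nlinarith
  set c := s - r with hc_def
  have h1 : c*c < 1 := by nlinarith
  have hden : (0:ℝ) < 1 - c*c := by linarith
  have t1 := Real.arctan_add h1
  set q := (c+c)/(1-c*c) with hq_def
  have h2 : q*c < 1 := by
    rw [hq_def, div_mul_eq_mul_div, div_lt_one hden]
    nlinarith
  have t2 := Real.arctan_add h2
  have h3' : (5/s)*(1/s) = 1/3 := by
    field_simp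
    linear_combination -hs
  have h3 : (5/s)*(1/s) < 1 := by rw [h3']; norm_num
  have t3 := Real.arctan_add h3
  have harg1 : (q+c)/(1-q*c) = 3*s/5 := by
    rw [div_eq_div_iff (by linarith : (1:ℝ) - q*c ≠ 0) (by norm_num : (5:ℝ) ≠ 0), hq_def]
    have hne : 1 - c^2 ≠ 0 := by nlinarith
    field_simp
    rw [hc_def]
    linear_combination ((4*s-3*r)*hs + (-6*s+5*r)*hr)
  have harg2 : (5/s+1/s)/(1-(5/s)*(1/s)) = 3*s/5 := by
    rw [h3', ← add_div]
    rw [div_eq_div_iff (by positivity) (by norm_num : (5:ℝ) ≠ 0)]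
    field_simp
    linear_combination -2*hs
  calc Real.arctan (5/s) + Real.arctan (1/s)
      = Real.arctan ((5/s+1/s)/(1-(5/s)*(1/s))) := t3
    _ = Real.arctan ((q+c)/(1-q*c)) := by rw [harg1, harg2]
    _ = Real.arctan q + Real.arctan c := t2.symm
    _ = (Real.arctan c + Real.arctan c) + Real.arctan c := by rw [t1]
    _ = 3 * Real.arctan c := by ring

theorem stmt_15 :
    ∑' k : ℕ, (27/20 : ℝ)^(k+1) / ((((k:ℝ)+1)) * (((3*(k+1)).choose (k+1) : ℕ) : ℝ)) =
    (Real.sqrt 15/2)*Real.arctan (Real.sqrt 15 - Real.sqrt 12) - (1/4)*Real.log (5/2) := by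
  rw [sum_eq_integral, integral_eval]
  have hFF1 : FF 1 = -(1/6)*Real.log 2 - (5/12)*Real.log 10
      + (Real.sqrt 15/6)*Real.arctan (5/Real.sqrt 15) := by
    unfold FF; norm_num
  have hFF0 : FF 0 = -(1/6)*Real.log 5 - (5/12)*Real.log 4
      - (Real.sqrt 15/6)*Real.arctan (1/Real.sqrt 15) := by
    unfold FF
    norm_num
    rw [show ((-1:ℝ))/Real.sqrt 15 = -(1/Real.sqrt 15) by ring, Real.arctan_neg]
    ring
  rw [hFF1, hFF0]
  have hlog10 : Real.log 10 = Real.log 2 + Real.log 5 := by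
    rw [show (10:ℝ) = 2*5 by norm_num, Real.log_mul (by norm_num) (by norm_num)]
  have hlog4 : Real.log 4 = 2 * Real.log 2 := by
    rw [show (4:ℝ) = 2^2 by norm_num, Real.log_pow]; push_cast; ring
  have hlog52 : Real.log (5/2) = Real.log 5 - Real.log 2 :=
    Real.log_div (by norm_num) (by norm_num)
  have hat := arctan_triple
  rw [hlog10, hlog4, hlog52]
  nlinarith [hat, Real.sqrt_nonneg 15]
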